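/- Let R > 0, R_B > 0 and E ∈ ℝ² with r := ‖E‖ satisfying R_B < r and r + R_B ≤ R. Then the set {ζ ∈ [0, 2π) : the closed segment from the origin to (R cos ζ, R sin ζ) intersects the closed ball of radius R_B centered at E} has one-dimensional Lebesgue measure 2·arcsin(R_B/r); equivalently the corresponding boundary arc has length L₀₁ = 2R·arcsin(R_B/r). -/

import Mathlib

open MeasureTheory Real

section Aux

open RealInnerProductSpace

private lemma shadow_key (R R_B r c : ℝ) (hR : 0 < R) (hRB : 0 < R_B) (hRBr : R_B < r)
    (hrR : r + R_B ≤ R)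
    (E P : EuclideanSpace ℝ (Fin 2)) (hE : ‖E‖ = r) (hP : ‖P‖ = R)
    (hc : c = Real.sqrt (r^2 - R_B^2)) :
    (segment ℝ 0 P ∩ Metric.closedBall E R_B).Nonempty ↔ c * R ≤ ⟪E, P⟫ := by
  have hr0 : 0 < r := hRB.trans hRBr
  have hc2 : c^2 = r^2 - R_B^2 := by
    rw [hc, Real.sq_sqrt]; nlinarith
  have hc0 : 0 ≤ c := hc ▸ Real.sqrt_nonneg _
  have hmem : ∀ x, x ∈ segment ℝ 0 P ∩ Metric.closedBall E R_B ↔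
      ∃ t ∈ Set.Icc (0:ℝ) 1, t • P = x ∧ ‖t • P - E‖ ≤ R_B := by
    intro x
    rw [Set.mem_inter_iff, segment_eq_image]
    constructor
    · rintro ⟨hx, hx2⟩
      simp only [Set.mem_image] at hx
      obtain ⟨t, ht, rfl⟩ := hx
      refine ⟨t, ht, by simp, ?_⟩
      simpa [dist_eq_norm] using hx2
    · rintro ⟨t, ht, rfl, h2⟩
      exact ⟨⟨t, ht, by simp⟩, by simpa [Metric.mem_closedBall, dist_eq_norm] using h2⟩
  have hsq : ∀ t : ℝ, ‖t • P - E‖^2 = t^2 * R^2 - 2 * t * ⟪E, P⟫ + r^2 := by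
    intro t
    rw [norm_sub_sq_real, norm_smul, real_inner_smul_left, real_inner_comm]
    simp [hE, hP, mul_pow]
    ring_nf
  constructor
  · rintro ⟨x, hx⟩
    rw [hmem] at hx
    obtain ⟨t, ht, -, hle⟩ := hx
    have h2 : ‖t • P - E‖^2 ≤ R_B^2 := by nlinarith [norm_nonneg (t • P - E)]
    rw [hsq] at h2
    have ht0 : t ≠ 0 := by
      rintro rfl
      simp at h2
      nlinarith
    have ht0' : 0 < t := lt_of_le_of_ne ht.1 (Ne.symm ht0)
    nlinarith [sq_nonneg (t * R - c)]
  · intro h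
    set q := (⟪E, P⟫ : ℝ) with hq
    have hqR : q ≤ r * R := by
      calc q ≤ ‖E‖ * ‖P‖ := real_inner_le_norm E P
      _ = r * R := by rw [hE, hP]
    refine ⟨(q / R^2) • P, ?_⟩
    rw [hmem]
    have hq0 : 0 ≤ q := le_trans (by positivity) h
    refine ⟨q / R^2, ⟨by positivity, ?_⟩, rfl, ?_⟩
    · rw [div_le_one (by positivity)]
      nlinarith
    · have : ‖(q / R^2) • P - E‖^2 ≤ R_B^2 := by
        rw [hsq]
        have : (q/R^2)^2 * R^2 - 2*(q/R^2)*q + r^2 = r^2 - q^2/R^2 := by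
          field_simp; ring
        rw [this]
        have : c^2 ≤ q^2 / R^2 := by
          rw [le_div_iff₀ (by positivity)]
          nlinarith [pow_le_pow_left₀ (mul_nonneg hc0 hR.le) h 2]
        nlinarith
      nlinarith [norm_nonneg ((q / R^2) • P - E), hRB]

private lemma shadow_cos_ge_iff_abs {α y : ℝ} (hα0 : 0 < α) (hα : α ≤ π/2) (hy1 : -π ≤ y)
    (hy2 : y ≤ π) : Real.cos α ≤ Real.cos y ↔ |y| ≤ α := by
  rw [← Real.cos_abs y]
  constructor
  · intro h
    by_contra hcon
    push_neg at hcon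
    have := Real.cos_lt_cos_of_nonneg_of_le_pi hα0.le
      (by rw [abs_le]; constructor <;> linarith) hcon
    linarith
  · intro h
    exact Real.cos_le_cos_of_nonneg_of_le_pi (abs_nonneg y) (by linarith) h

private lemma shadow_cos_ge_iff {α x : ℝ} (hα0 : 0 < α) (hα : α ≤ π/2) (hx1 : -π ≤ x)
    (hx2 : x < 3*π) : Real.cos α ≤ Real.cos x ↔ |x| ≤ α ∨ |x - 2*π| ≤ α := by
  have hpi := Real.pi_pos
  by_cases hx : x ≤ π
  · rw [shadow_cos_ge_iff_abs hα0 hα hx1 hx]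
    constructor
    · exact Or.inl
    · rintro (h | h)
      · exact h
      · rw [abs_le] at h; exfalso; linarith [h.1]
  · push_neg at hx
    have h1 : Real.cos x = Real.cos (x - 2*π) := (Real.cos_sub_two_pi x).symm
    rw [h1, shadow_cos_ge_iff_abs hα0 hα (by linarith) (by linarith)]
    constructor
    · exact Or.inr
    · rintro (h | h)
      · rw [abs_le] at h; exfalso; linarith [h.2]
      · exact h

private lemma shadow_measure_arc {α θ : ℝ} (hα0 : 0 < α) (hα : α ≤ π/2) (hθ1 : -π < θ)
    (hθ2 : θ ≤ π) :
    volume {ζ ∈ Set.Ico (0:ℝ) (2*π) | Real.cos α ≤ Real.cos (ζ - θ)} =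
      ENNReal.ofReal (2*α) := by
  have hpi := Real.pi_pos
  have hset : {ζ ∈ Set.Ico (0:ℝ) (2*π) | Real.cos α ≤ Real.cos (ζ - θ)} =
      Set.Ico (0:ℝ) (2*π) ∩ (Set.Icc (θ-α) (θ+α) ∪ Set.Icc (θ+2*π-α) (θ+2*π+α)) := by
    ext ζ
    simp only [Set.mem_setOf_eq, Set.mem_inter_iff, Set.mem_Ico, Set.mem_union, Set.mem_Icc]
    constructor
    · rintro ⟨⟨h0, h2⟩, hcos⟩
      refine ⟨⟨h0, h2⟩, ?_⟩
      rw [shadow_cos_ge_iff hα0 hα (by linarith) (by linarith)] at hcos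
      rcases hcos with h | h <;> rw [abs_le] at h
      · left; constructor <;> linarith [h.1, h.2]
      · right; constructor <;> linarith [h.1, h.2]
    · rintro ⟨⟨h0, h2⟩, hmem⟩
      refine ⟨⟨h0, h2⟩, ?_⟩
      rw [shadow_cos_ge_iff hα0 hα (by linarith) (by linarith)]
      rcases hmem with h | h
      · left; rw [abs_le]; constructor <;> linarith [h.1, h.2]
      · right; rw [abs_le]; constructor <;> linarith [h.1, h.2]
  rw [hset]
  rcases le_or_gt α θ with h1 | h1
  · have : Set.Ico (0:ℝ) (2*π) ∩ (Set.Icc (θ-α) (θ+α) ∪ Set.Icc (θ+2*π-α) (θ+2*π+α)) =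
        Set.Icc (θ-α) (θ+α) := by
      ext ζ
      simp only [Set.mem_inter_iff, Set.mem_Ico, Set.mem_union, Set.mem_Icc]
      constructor
      · rintro ⟨⟨h0, h2⟩, hmem | hmem⟩
        · exact hmem
        · exfalso; linarith [hmem.1]
      · rintro ⟨ha, hb⟩
        exact ⟨⟨by linarith, by linarith⟩, Or.inl ⟨ha, hb⟩⟩
    rw [this, Real.volume_Icc]
    congr 1; ring
  rcases le_or_gt (-α) θ with h2 | h2
  · have : Set.Ico (0:ℝ) (2*π) ∩ (Set.Icc (θ-α) (θ+α) ∪ Set.Icc (θ+2*π-α) (θ+2*π+α)) =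
        Set.Icc (0:ℝ) (θ+α) ∪ Set.Ico (θ+2*π-α) (2*π) := by
      ext ζ
      simp only [Set.mem_inter_iff, Set.mem_Ico, Set.mem_union, Set.mem_Icc]
      constructor
      · rintro ⟨⟨h0, hlt⟩, hmem | hmem⟩
        · left; exact ⟨h0, hmem.2⟩
        · right; exact ⟨hmem.1, hlt⟩
      · rintro (⟨ha, hb⟩ | ⟨ha, hb⟩)
        · exact ⟨⟨ha, by linarith⟩, Or.inl ⟨by linarith, hb⟩⟩
        · exact ⟨⟨by linarith, hb⟩, Or.inr ⟨ha, by linarith⟩⟩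
    rw [this, measure_union _ measurableSet_Ico, Real.volume_Icc, Real.volume_Ico,
      ← ENNReal.ofReal_add (by linarith) (by linarith)]
    · congr 1; ring
    · rw [Set.disjoint_iff]
      rintro ζ ⟨⟨-, hb⟩, ⟨hc, -⟩⟩
      exfalso; linarith
  · have : Set.Ico (0:ℝ) (2*π) ∩ (Set.Icc (θ-α) (θ+α) ∪ Set.Icc (θ+2*π-α) (θ+2*π+α)) =
        Set.Icc (θ+2*π-α) (θ+2*π+α) := by
      ext ζ
      simp only [Set.mem_inter_iff, Set.mem_Ico, Set.mem_union, Set.mem_Icc]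
      constructor
      · rintro ⟨⟨h0, hlt⟩, hmem | hmem⟩
        · exfalso; linarith [hmem.2]
        · exact hmem
      · rintro ⟨ha, hb⟩
        exact ⟨⟨by linarith, by linarith⟩, Or.inr ⟨ha, hb⟩⟩
    rw [this, Real.volume_Icc]
    congr 1; ring

end Aux

/-- The point of the Euclidean plane with Cartesian coordinates `(a, b)`. -/
noncomputable def pt (a b : ℝ) : EuclideanSpace ℝ (Fin 2) :=
  (WithLp.equiv 2 (Fin 2 → ℝ)).symm ![a, b]

/-- Shadow arc of a circular blockage seen from the base station at the origin
(equation (3) of the paper): the set of polar angles `ζ ∈ [0, 2π)` of boundary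
points of the disk of radius `R` whose line-of-sight segment to the origin meets
the closed blockage ball of radius `R_B` centered at `E` (with `r = ‖E‖`,
`R_B < r`, `r + R_B ≤ R`) has one-dimensional Lebesgue measure `2·arcsin(R_B/r)`;
the corresponding boundary arc has length `L₀₁ = 2R·arcsin(R_B/r)`. -/
theorem shadow_arc_from_base_station
    (R R_B : ℝ) (hR : 0 < R) (hRB : 0 < R_B)
    (E : EuclideanSpace ℝ (Fin 2)) (r : ℝ) (hr : r = ‖E‖)
    (hRBr : R_B < r) (hrR : r + R_B ≤ R) :
    volume {ζ ∈ Set.Ico (0 : ℝ) (2 * π) |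
        (segment ℝ 0 (pt (R * Real.cos ζ) (R * Real.sin ζ)) ∩
          Metric.closedBall E R_B).Nonempty} =
      ENNReal.ofReal (2 * Real.arcsin (R_B / r)) := by
  have hr0 : 0 < r := hRB.trans hRBr
  set z : ℂ := ⟨E 0, E 1⟩ with hz
  have hzabs : ‖z‖ = r := by
    rw [hr, EuclideanSpace.norm_eq, Complex.norm_def, Complex.normSq_apply]
    simp [Fin.sum_univ_two, sq_abs]
    ring_nf
    rfl
  have hz0 : z ≠ 0 := by
    intro h
    rw [h] at hzabs; simp at hzabs; linarith
  set θ := Complex.arg z with hθ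
  have hθ1 : -π < θ := Complex.neg_pi_lt_arg z
  have hθ2 : θ ≤ π := Complex.arg_le_pi z
  have hE0 : E 0 = r * Real.cos θ := by
    rw [hθ, Complex.cos_arg hz0, hzabs]
    field_simp
    rfl
  have hE1 : E 1 = r * Real.sin θ := by
    rw [hθ, Complex.sin_arg, hzabs]
    field_simp
    rfl
  set α := Real.arcsin (R_B / r) with hαdef
  have hα0 : 0 < α := Real.arcsin_pos.2 (by positivity)
  have hαle : α ≤ π/2 := Real.arcsin_le_pi_div_two _
  have hcosα : Real.cos α = Real.sqrt (1 - (R_B/r)^2) := Real.cos_arcsin _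
  have hcosα0 : 0 ≤ Real.cos α := hcosα ▸ Real.sqrt_nonneg _
  have hcval : Real.sqrt (r^2 - R_B^2) = r * Real.cos α := by
    rw [hcosα, ← Real.sqrt_sq hr0.le, ← Real.sqrt_mul (by positivity)]
    congr 1
    field_simp
    rw [Real.sq_sqrt (sq_nonneg r)]
  have hinner : ∀ ζ : ℝ,
      (inner ℝ E (pt (R * Real.cos ζ) (R * Real.sin ζ)) : ℝ) = R * r * Real.cos (ζ - θ) := by
    intro ζ
    have h1 : (inner ℝ E (pt (R * Real.cos ζ) (R * Real.sin ζ)) : ℝ)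
        = E 0 * (R * Real.cos ζ) + E 1 * (R * Real.sin ζ) := by
      simp [pt, WithLp.equiv_symm_apply, PiLp.inner_apply, Fin.sum_univ_two, RCLike.inner_apply]
      ring
    rw [h1, hE0, hE1, Real.cos_sub]
    ring
  have hPnorm : ∀ ζ : ℝ, ‖pt (R * Real.cos ζ) (R * Real.sin ζ)‖ = R := by
    intro ζ
    rw [EuclideanSpace.norm_eq]
    simp only [pt, WithLp.equiv_symm_apply, WithLp.ofLp_toLp, Fin.sum_univ_two]
    rw [Matrix.cons_val_zero, Matrix.cons_val_one, Matrix.cons_val_zero]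
    rw [show ‖R * Real.cos ζ‖ ^ 2 + ‖R * Real.sin ζ‖ ^ 2
        = R^2 * ((Real.cos ζ)^2 + (Real.sin ζ)^2) by
      rw [Real.norm_eq_abs, Real.norm_eq_abs, sq_abs, sq_abs]; ring]
    rw [Real.cos_sq_add_sin_sq, mul_one, Real.sqrt_sq hR.le]
  have hseteq : {ζ ∈ Set.Ico (0 : ℝ) (2 * π) |
        (segment ℝ 0 (pt (R * Real.cos ζ) (R * Real.sin ζ)) ∩
          Metric.closedBall E R_B).Nonempty} =
      {ζ ∈ Set.Ico (0:ℝ) (2*π) | Real.cos α ≤ Real.cos (ζ - θ)} := by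
    ext ζ
    simp only [Set.mem_setOf_eq, Set.mem_sep_iff]
    refine and_congr_right fun _ => ?_
    rw [shadow_key R R_B r (Real.sqrt (r^2 - R_B^2)) hR hRB hRBr hrR E
      (pt (R * Real.cos ζ) (R * Real.sin ζ)) hr.symm (hPnorm ζ) rfl, hinner ζ, hcval,
      show r * Real.cos α * R = R * r * Real.cos α by ring,
      mul_le_mul_iff_right₀ (show (0:ℝ) < R * r by positivity)]
  rw [hseteq, shadow_measure_arc hα0 hαle hθ1 hθ2]
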